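/- arXiv:2509.06480 — 2 statements merged into one kernel-verified Lean document; each statement's English description precedes it below -/
import Mathlib

section
/- Let H be a real Hilbert space, a < b real numbers with τ = b − a, and p : ℝ → H a function such that p has derivative p′(t) and p′ has derivative p″(t) at every t ∈ [a,b], with p″ continuous on [a,b]. Then the backward-Euler consistency error satisfies ‖p′(b) − (p(b) − p(a))/τ‖² ≤ (τ/3) ∫_a^b ‖p″(t)‖² dt. -/
open intervalIntegral

/-- Cauchy–Schwarz for interval integrals of continuous functions. -/
lemma cs_interval {a b : ℝ} (hab : a ≤ b) {f g : ℝ → ℝ}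
    (hf : ContinuousOn f (Set.Icc a b)) (hg : ContinuousOn g (Set.Icc a b)) :
    (∫ t in a..b, f t * g t) ^ 2 ≤ (∫ t in a..b, f t ^ 2) * (∫ t in a..b, g t ^ 2) := by
  have hu : Set.uIcc a b = Set.Icc a b := Set.uIcc_of_le hab
  have hif : IntervalIntegrable (fun t => f t ^ 2) MeasureTheory.volume a b :=
    ContinuousOn.intervalIntegrable (by rw [hu]; exact hf.pow 2)
  have hig : IntervalIntegrable (fun t => g t ^ 2) MeasureTheory.volume a b :=
    ContinuousOn.intervalIntegrable (by rw [hu]; exact hg.pow 2)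
  have hifg : IntervalIntegrable (fun t => f t * g t) MeasureTheory.volume a b :=
    ContinuousOn.intervalIntegrable (by rw [hu]; exact hf.mul hg)
  set A := ∫ t in a..b, g t ^ 2 with hA
  set B := ∫ t in a..b, f t * g t with hB
  set C := ∫ t in a..b, f t ^ 2 with hC
  have key : ∀ x : ℝ, 0 ≤ A * (x * x) + (-2 * B) * x + C := by
    intro x
    have expand : ∀ t : ℝ, (x * g t - f t) ^ 2
        = x ^ 2 * g t ^ 2 + (-2 * x) * (f t * g t) + f t ^ 2 := by intro t; ring
    have h1 : (∫ t in a..b, (x * g t - f t) ^ 2)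
        = x ^ 2 * A + (-2 * x) * B + C := by
      rw [hA, hB, hC, ← intervalIntegral.integral_const_mul,
        ← intervalIntegral.integral_const_mul,
        ← intervalIntegral.integral_add ((hig.const_mul _)) ((hifg.const_mul _)),
        ← intervalIntegral.integral_add (((hig.const_mul _)).add ((hifg.const_mul _))) hif]
      exact intervalIntegral.integral_congr fun t _ => expand t
    have h2 : 0 ≤ ∫ t in a..b, (x * g t - f t) ^ 2 :=
      intervalIntegral.integral_nonneg hab fun t _ => sq_nonneg _
    nlinarith [h1, h2]
  have hd := discrim_le_zero key
  rw [discrim] at hd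
  nlinarith [hd]

/-- Backward-Euler consistency error:
`‖p′(b) − (p(b) − p(a))/τ‖² ≤ (τ/3) ∫_a^b ‖p″(t)‖² dt` with `τ = b − a`. -/
theorem backward_euler_consistency
    {H : Type*} [NormedAddCommGroup H] [InnerProductSpace ℝ H] [CompleteSpace H]
    {a b : ℝ} (hab : a < b) (τ : ℝ) (hτ : τ = b - a)
    (p p' p'' : ℝ → H)
    (hp : ∀ t ∈ Set.Icc a b, HasDerivAt p (p' t) t)
    (hp' : ∀ t ∈ Set.Icc a b, HasDerivAt p' (p'' t) t)
    (hp'' : ContinuousOn p'' (Set.Icc a b)) :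
    ‖p' b - τ⁻¹ • (p b - p a)‖ ^ 2 ≤ (τ / 3) * ∫ t in a..b, ‖p'' t‖ ^ 2 := by
  have hu : Set.uIcc a b = Set.Icc a b := Set.uIcc_of_le hab.le
  have hτpos : 0 < τ := by rw [hτ]; linarith
  have hcp' : ContinuousOn p' (Set.Icc a b) :=
    fun t ht => ((hp' t ht).continuousAt).continuousWithinAt
  have hip' : IntervalIntegrable p' MeasureTheory.volume a b :=
    ContinuousOn.intervalIntegrable (by rw [hu]; exact hcp')
  have hip'' : IntervalIntegrable p'' MeasureTheory.volume a b :=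
    ContinuousOn.intervalIntegrable (by rw [hu]; exact hp'')
  have hismul : IntervalIntegrable (fun t => (t - a) • p'' t) MeasureTheory.volume a b :=
    ContinuousOn.intervalIntegrable (by rw [hu]; exact (continuousOn_id.sub continuousOn_const).smul hp'')
  -- FTC for p
  have key1 : (∫ t in a..b, p' t) = p b - p a :=
    intervalIntegral.integral_eq_sub_of_hasDerivAt
      (fun t ht => hp t (by rwa [hu] at ht)) hip'
  -- integration by parts
  have key2 : (∫ t in a..b, (p' t + (t - a) • p'' t)) = (b - a) • p' b := by
    have := intervalIntegral.integral_eq_sub_of_hasDerivAt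
      (f := fun t => (t - a) • p' t) (f' := fun t => p' t + (t - a) • p'' t)
      (fun t ht => by
        have h1 : HasDerivAt (fun s : ℝ => s - a) 1 t :=
          (hasDerivAt_id t).sub_const a
        have h2 := hp' t (by rwa [hu] at ht)
        have := h1.smul h2
        exact (by simpa [one_smul, add_comm] using this :
          HasDerivAt ((fun s : ℝ => s - a) • p') (p' t + (t - a) • p'' t) t))
      ((hip'.add hismul))
    simpa using this
  have key3 : (∫ t in a..b, (t - a) • p'' t) = τ • p' b - (p b - p a) := by
    have := intervalIntegral.integral_add hip' hismul
    rw [key2, key1] at this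
    rw [hτ]
    linear_combination (norm := abel) -this
  have keyE : p' b - τ⁻¹ • (p b - p a) = τ⁻¹ • ∫ t in a..b, (t - a) • p'' t := by
    rw [key3, smul_sub τ⁻¹ (τ • p' b) (p b - p a), smul_smul, inv_mul_cancel₀ hτpos.ne', one_smul]
  -- norm bound
  have step1 : ‖∫ t in a..b, (t - a) • p'' t‖ ≤ ∫ t in a..b, (t - a) * ‖p'' t‖ := by
    have := intervalIntegral.norm_integral_le_integral_norm
      (μ := MeasureTheory.volume) (f := fun t => (t - a) • p'' t) hab.le
    refine this.trans_eq ?_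
    refine intervalIntegral.integral_congr fun t ht => ?_
    rw [hu] at ht
    rw [norm_smul, Real.norm_eq_abs, abs_of_nonneg (by linarith [ht.1])]
  set X := ∫ t in a..b, (t - a) * ‖p'' t‖ with hX
  set Y := ∫ t in a..b, ‖p'' t‖ ^ 2 with hY
  -- Cauchy-Schwarz
  have hcs : X ^ 2 ≤ (∫ t in a..b, (t - a) ^ 2) * Y :=
    cs_interval hab.le (continuousOn_id.sub continuousOn_const) (hp''.norm)
  -- compute ∫ (t-a)^2
  have hpoly : (∫ t in a..b, (t - a) ^ 2) = τ ^ 3 / 3 := by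
    have hF : ∀ t ∈ Set.uIcc a b, HasDerivAt (fun s => (s - a) ^ 3 / 3) ((t - a) ^ 2) t := by
      intro t _
      have h : HasDerivAt (fun s : ℝ => (s - a) ^ 3 / 3) _ t :=
        (((hasDerivAt_id t).sub_const a).pow 3).div_const 3
      convert h using 1
      simp only [id_eq]
      ring
    have hi : IntervalIntegrable (fun t => (t - a) ^ 2) MeasureTheory.volume a b :=
      ((continuous_id.sub continuous_const).pow 2).intervalIntegrable a b
    rw [intervalIntegral.integral_eq_sub_of_hasDerivAt hF hi, hτ]
    ring
  rw [hpoly] at hcs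
  have hYnn : 0 ≤ Y :=
    intervalIntegral.integral_nonneg hab.le fun t _ => sq_nonneg _
  have step2 : ‖p' b - τ⁻¹ • (p b - p a)‖ ≤ τ⁻¹ * X := by
    rw [keyE, norm_smul, Real.norm_eq_abs, abs_of_pos (inv_pos.mpr hτpos)]
    exact mul_le_mul_of_nonneg_left step1 (inv_pos.mpr hτpos).le
  have h1 : ‖p' b - τ⁻¹ • (p b - p a)‖ ^ 2 ≤ (τ⁻¹ * X) ^ 2 :=
    pow_le_pow_left₀ (norm_nonneg _) step2 2
  have h2 : (τ⁻¹ * X) ^ 2 ≤ τ⁻¹ ^ 2 * ((τ ^ 3 / 3) * Y) := by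
    have : (τ⁻¹ * X) ^ 2 = τ⁻¹ ^ 2 * X ^ 2 := by ring
    rw [this]
    exact mul_le_mul_of_nonneg_left hcs (by positivity)
  have h3 : τ⁻¹ ^ 2 * ((τ ^ 3 / 3) * Y) = (τ / 3) * Y := by
    field_simp
  linarith
end

section
/- Let H be a real Hilbert space, a ∈ ℝ, τ > 0, N a positive integer, and p : ℝ → H a function such that p has derivative p′(t) and p′ has derivative p″(t) at every t ∈ [a, a + Nτ], with p″ continuous on [a, a + Nτ]. Set t_n = a + nτ for n = 0, …, N. Then the accumulated backward-Euler consistency error satisfies Σ_{n=0}^{N−1} ‖p′(t_{n+1}) − (p(t_{n+1}) − p(t_n))/τ‖² ≤ (τ/3) ∫_a^{a+Nτ} ‖p″(t)‖² dt. -/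
open intervalIntegral MeasureTheory

open MeasureTheory in
lemma key_step_consistency {H : Type*} [NormedAddCommGroup H] [InnerProductSpace ℝ H]
    [CompleteSpace H] {u v : ℝ} (huv : u < v) (p p' p'' : ℝ → H)
    (hp : ∀ t ∈ Set.Icc u v, HasDerivAt p (p' t) t)
    (hp' : ∀ t ∈ Set.Icc u v, HasDerivAt p' (p'' t) t)
    (hp'' : ContinuousOn p'' (Set.Icc u v)) :
    ‖p' v - (v - u)⁻¹ • (p v - p u)‖ ^ 2 ≤
      ((v - u) / 3) * ∫ t in u..v, ‖p'' t‖ ^ 2 := by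
  set τ : ℝ := v - u with hτdef
  have hτ : 0 < τ := sub_pos.mpr huv
  -- derivative identity
  have hF : ∀ t ∈ Set.Icc u v,
      HasDerivAt (fun s => (s - u) • p' s - p s) ((t - u) • p'' t) t := by
    intro t ht
    have h1 : HasDerivAt (fun s : ℝ => s - u) 1 t := (hasDerivAt_id t).sub_const u
    have h2 := (h1.smul (hp' t ht)).sub (hp t ht)
    convert h2 using 1
    · rfl
    simp
  have hcont : ContinuousOn (fun t => (t - u) • p'' t) (Set.Icc u v) :=
    ((continuous_id.sub continuous_const).continuousOn).smul hp''
  have hint : IntervalIntegrable (fun t => (t - u) • p'' t) volume u v :=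
    (hcont.mono (by rw [Set.uIcc_of_le huv.le])).intervalIntegrable
  have hid : (∫ t in u..v, (t - u) • p'' t) = τ • p' v - (p v - p u) := by
    rw [intervalIntegral.integral_eq_sub_of_hasDerivAt
      (fun t ht => hF t (by rwa [Set.uIcc_of_le huv.le] at ht)) hint]
    simp [hτdef, sub_smul]
    abel
  have herr : p' v - τ⁻¹ • (p v - p u) = τ⁻¹ • ∫ t in u..v, (t - u) • p'' t := by
    have h3 : τ⁻¹ • (τ • p' v - (p v - p u)) = p' v - τ⁻¹ • (p v - p u) := by
      rw [smul_sub, smul_smul, inv_mul_cancel₀ hτ.ne', one_smul]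
    rw [hid, h3]
  set μ := volume.restrict (Set.Ioc u v) with hμ
  haveI : IsFiniteMeasure μ := by
    constructor
    rw [hμ, Measure.restrict_apply_univ]
    exact measure_Ioc_lt_top
  -- MemLp facts
  have hfm : MemLp (fun t : ℝ => t - u) (ENNReal.ofReal 2) μ := by
    apply MemLp.of_bound (continuous_id.sub continuous_const).aestronglyMeasurable τ
    refine (ae_restrict_iff' measurableSet_Ioc).2 (Filter.Eventually.of_forall ?_)
    intro t ht
    show ‖t - u‖ ≤ τ
    rw [Real.norm_eq_abs, abs_of_pos (sub_pos.mpr ht.1)]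
    linarith [ht.2]
  obtain ⟨C, hC⟩ := isCompact_Icc.exists_bound_of_continuousOn hp''
  have hgm : MemLp (fun t => ‖p'' t‖) (ENNReal.ofReal 2) μ := by
    apply MemLp.of_bound ((hp''.norm.aestronglyMeasurable measurableSet_Icc).mono_measure
      (Measure.restrict_mono Set.Ioc_subset_Icc_self le_rfl)) C
    refine (ae_restrict_iff' measurableSet_Ioc).2 (Filter.Eventually.of_forall ?_)
    intro t ht
    rw [norm_norm]
    exact hC t ⟨ht.1.le, ht.2⟩
  have hconj : Real.HolderConjugate 2 2 := Real.HolderConjugate.two_two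
  have hCS := MeasureTheory.integral_mul_norm_le_Lp_mul_Lq hconj hfm hgm
  -- compute the two L² norms
  have hrpow : ∀ x : ℝ, 0 ≤ x → x ^ (2 : ℝ) = x ^ (2 : ℕ) := by
    intro x hx
    rw [show (2 : ℝ) = ((2 : ℕ) : ℝ) by norm_num, Real.rpow_natCast]
  have hA : (∫ t, ‖t - u‖ ^ (2 : ℝ) ∂μ) = τ ^ 3 / 3 := by
    have : (∫ t, ‖t - u‖ ^ (2 : ℝ) ∂μ) = ∫ t in u..v, (t - u) ^ 2 := by
      rw [intervalIntegral.integral_of_le huv.le]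
      apply MeasureTheory.integral_congr_ae
      refine (ae_restrict_iff' measurableSet_Ioc).2 (Filter.Eventually.of_forall ?_)
      intro t _
      show ‖t - u‖ ^ (2:ℝ) = (t - u) ^ 2
      rw [hrpow _ (norm_nonneg _), Real.norm_eq_abs, sq_abs]
    rw [this, intervalIntegral.integral_comp_sub_right (fun s => s ^ 2) u]
    simp [integral_pow]
    ring
  have hB : (∫ t, ‖(fun s => ‖p'' s‖) t‖ ^ (2 : ℝ) ∂μ) = ∫ t in u..v, ‖p'' t‖ ^ 2 := by
    rw [intervalIntegral.integral_of_le huv.le]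
    apply MeasureTheory.integral_congr_ae
    refine Filter.Eventually.of_forall fun t => ?_
    show ‖‖p'' t‖‖ ^ (2:ℝ) = ‖p'' t‖ ^ 2
    rw [norm_norm]
    exact hrpow _ (norm_nonneg _)
  set B : ℝ := ∫ t in u..v, ‖p'' t‖ ^ 2 with hBdef
  have hB0 : 0 ≤ B := intervalIntegral.integral_nonneg huv.le fun t _ => sq_nonneg _
  -- norm bound
  have hnorm1 : ‖p' v - τ⁻¹ • (p v - p u)‖ ≤
      τ⁻¹ * ∫ t, ‖t - u‖ * ‖(fun s => ‖p'' s‖) t‖ ∂μ := by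
    rw [herr, norm_smul, Real.norm_eq_abs, abs_of_pos (inv_pos.mpr hτ)]
    apply mul_le_mul_of_nonneg_left _ (inv_pos.mpr hτ).le
    calc ‖∫ t in u..v, (t - u) • p'' t‖ ≤ ∫ t in u..v, ‖(t - u) • p'' t‖ :=
          intervalIntegral.norm_integral_le_integral_norm huv.le
      _ = ∫ t, ‖t - u‖ * ‖(fun s => ‖p'' s‖) t‖ ∂μ := by
          rw [intervalIntegral.integral_of_le huv.le]
          refine MeasureTheory.integral_congr_ae
            (Filter.Eventually.of_forall fun t => ?_)
          show ‖(t - u) • p'' t‖ = ‖t - u‖ * ‖‖p'' t‖‖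
          rw [norm_smul, norm_norm]
  have hfin : ‖p' v - τ⁻¹ • (p v - p u)‖ ≤
      τ⁻¹ * (Real.sqrt (τ ^ 3 / 3) * Real.sqrt B) := by
    refine hnorm1.trans ?_
    apply mul_le_mul_of_nonneg_left _ (inv_pos.mpr hτ).le
    calc (∫ t, ‖t - u‖ * ‖(fun s => ‖p'' s‖) t‖ ∂μ)
        ≤ (∫ t, ‖t - u‖ ^ (2:ℝ) ∂μ) ^ (1/(2:ℝ)) *
          (∫ t, ‖(fun s => ‖p'' s‖) t‖ ^ (2:ℝ) ∂μ) ^ (1/(2:ℝ)) := hCS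
      _ = Real.sqrt (τ ^ 3 / 3) * Real.sqrt B := by
          rw [hA, hB, Real.sqrt_eq_rpow, Real.sqrt_eq_rpow]
  have hsq := pow_le_pow_left₀ (norm_nonneg _) hfin 2
  calc ‖p' v - (v - u)⁻¹ • (p v - p u)‖ ^ 2
      = ‖p' v - τ⁻¹ • (p v - p u)‖ ^ 2 := by rw [hτdef]
    _ ≤ (τ⁻¹ * (Real.sqrt (τ ^ 3 / 3) * Real.sqrt B)) ^ 2 := hsq
    _ = τ⁻¹ ^ 2 * ((τ ^ 3 / 3) * B) := by
        rw [mul_pow, mul_pow, Real.sq_sqrt (by positivity), Real.sq_sqrt hB0]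
    _ = (τ / 3) * B := by field_simp

set_option maxHeartbeats 1600000 in
/-- Accumulated backward-Euler consistency error:
`Σ_{n=0}^{N−1} ‖p′(t_{n+1}) − (p(t_{n+1}) − p(t_n))/τ‖² ≤ (τ/3) ∫_a^{a+Nτ} ‖p″(t)‖² dt`
where `t_n = a + nτ`. -/
theorem sum_backward_euler_consistency
    {H : Type*} [NormedAddCommGroup H] [InnerProductSpace ℝ H] [CompleteSpace H]
    (a : ℝ) {τ : ℝ} (hτ : 0 < τ) {N : ℕ} (hN : 0 < N) (p p' p'' : ℝ → H)
    (hp : ∀ t ∈ Set.Icc a (a + N * τ), HasDerivAt p (p' t) t)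
    (hp' : ∀ t ∈ Set.Icc a (a + N * τ), HasDerivAt p' (p'' t) t)
    (hp'' : ContinuousOn p'' (Set.Icc a (a + N * τ))) :
    ∑ n ∈ Finset.range N,
        ‖p' (a + (n + 1) * τ) - τ⁻¹ • (p (a + (n + 1) * τ) - p (a + n * τ))‖ ^ 2 ≤
      (τ / 3) * ∫ t in a..(a + N * τ), ‖p'' t‖ ^ 2 := by
  have hsub : ∀ n : ℕ, n < N →
      Set.Icc (a + n * τ) (a + (n + 1) * τ) ⊆ Set.Icc a (a + N * τ) := by
    intro n hn
    apply Set.Icc_subset_Icc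
    · have h0 : (0:ℝ) ≤ (n:ℝ) * τ := mul_nonneg (Nat.cast_nonneg n) hτ.le
      linarith
    · have h1 : (n : ℝ) + 1 ≤ N := by exact_mod_cast hn
      have h2 := mul_le_mul_of_nonneg_right h1 hτ.le
      linarith
  have key : ∀ n ∈ Finset.range N,
      ‖p' (a + (n + 1) * τ) - τ⁻¹ • (p (a + (n + 1) * τ) - p (a + n * τ))‖ ^ 2 ≤
        (τ / 3) * ∫ t in (a + n * τ)..(a + (n + 1) * τ), ‖p'' t‖ ^ 2 := by
    intro n hn
    rw [Finset.mem_range] at hn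
    have hlt : a + n * τ < a + ((n:ℝ) + 1) * τ := by
      have : (n:ℝ) * τ < ((n:ℝ) + 1) * τ := by linarith
      linarith
    have h := key_step_consistency hlt p p' p''
      (fun t ht => hp t (hsub n hn ht)) (fun t ht => hp' t (hsub n hn ht))
      (hp''.mono (hsub n hn))
    have heq : a + ((n : ℝ) + 1) * τ - (a + n * τ) = τ := by ring
    rw [heq] at h
    exact h
  refine le_trans (Finset.sum_le_sum key) ?_
  rw [← Finset.mul_sum]
  apply le_of_eq
  congr 1
  have hintn : ∀ k < N, IntervalIntegrable (fun t => ‖p'' t‖ ^ 2) volume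
      (a + k * τ) (a + ((k + 1 : ℕ) : ℝ) * τ) := by
    intro k hk
    apply ContinuousOn.intervalIntegrable
    have hlt : a + (k:ℝ) * τ ≤ a + (((k + 1 : ℕ)):ℝ) * τ := by
      push_cast
      have : (k:ℝ) * τ ≤ ((k:ℝ) + 1) * τ := by linarith
      linarith
    rw [Set.uIcc_of_le hlt]
    refine ((hp''.mono ?_).norm.pow 2)
    have := hsub k hk
    push_cast
    push_cast at this
    exact this
  have := intervalIntegral.sum_integral_adjacent_intervals
    (f := fun t => ‖p'' t‖ ^ 2) (μ := volume) (a := fun k : ℕ => a + k * τ) (n := N) hintn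
  simpa using this
end
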